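/- arXiv:1904.09284 — 2 statements merged into one kernel-verified Lean document; each statement's English description precedes it below -/
import Mathlib

section
/- With M(·) the transportation LP from an arbitrary subset to the whole n-point metric space, ∑_{k=1}^{n} E_{S_k ~ U_k}[M(S_k)] ≤ 2·∑_{k=1}^{⌊n/2⌋} E_{S_k ~ U_k}[M(S_k)], where U_k is the uniform distribution on k-subsets. -/
open Finset

/-- `transportVal n d T` is the optimal value of the fractional transportation LP between
the subset `T` of the `n`-point space (each point of `T` with supply `1/|T|`) and the whole
space (each point with demand `1/n`), with costs `d`. -/
noncomputable def transportVal (n : ℕ) (d : Fin n → Fin n → ℝ) (T : Finset (Fin n)) : ℝ :=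
  sInf {c : ℝ | ∃ x : Fin n → Fin n → ℝ,
    (∀ i j, 0 ≤ x i j) ∧
    (∀ i ∈ T, ∑ j, x i j = 1 / (T.card : ℝ)) ∧
    (∀ j, ∑ i ∈ T, x i j = 1 / (n : ℝ)) ∧
    c = ∑ i ∈ T, ∑ j, d i j * x i j}

section Aux

variable {n : ℕ} {d : Fin n → Fin n → ℝ}

lemma transportVal_nonneg (d_nonneg : ∀ i j, 0 ≤ d i j) (T : Finset (Fin n)) :
    0 ≤ transportVal n d T := by
  apply Real.sInf_nonneg
  rintro c ⟨x, hx0, -, -, rfl⟩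
  exact Finset.sum_nonneg fun i _ => Finset.sum_nonneg fun j _ =>
    mul_nonneg (d_nonneg i j) (hx0 i j)

lemma transportVal_le (d_nonneg : ∀ i j, 0 ≤ d i j) (T : Finset (Fin n))
    (x : Fin n → Fin n → ℝ) (hx0 : ∀ i j, 0 ≤ x i j)
    (hrow : ∀ i ∈ T, ∑ j, x i j = 1 / (T.card : ℝ))
    (hcol : ∀ j, ∑ i ∈ T, x i j = 1 / (n : ℝ)) :
    transportVal n d T ≤ ∑ i ∈ T, ∑ j, d i j * x i j := by
  apply csInf_le
  · refine ⟨0, ?_⟩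
    rintro c ⟨x', hx0', -, -, rfl⟩
    exact Finset.sum_nonneg fun i _ => Finset.sum_nonneg fun j _ =>
      mul_nonneg (d_nonneg i j) (hx0' i j)
  · exact ⟨x, hx0, hrow, hcol, rfl⟩

lemma transportVal_univ_eq_zero (d_nonneg : ∀ i j, 0 ≤ d i j) (d_self : ∀ i, d i i = 0) :
    transportVal n d (univ : Finset (Fin n)) = 0 := by
  refine le_antisymm ?_ (transportVal_nonneg d_nonneg _)
  have h := transportVal_le d_nonneg (univ : Finset (Fin n))
      (fun i j => if i = j then 1 / (n : ℝ) else 0)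
      (fun i j => by positivity)
      (fun i _ => by simp [Finset.card_univ])
      (fun j => by simp [Finset.sum_ite_eq'])
  calc transportVal n d univ ≤ ∑ i : Fin n, ∑ j, d i j * (if i = j then 1 / (n:ℝ) else 0) := h
    _ = 0 := by
        simp [Finset.mul_sum, mul_ite, Finset.sum_ite_eq, d_self]

end Aux
section Aux2
open Finset Matrix

private lemma aux_isUnit (n : ℕ) (P : Matrix (Fin n) (Fin n) ℝ) (c : ℝ) (hc : c < 1)
    (hP0 : ∀ v w, 0 ≤ P v w) (hProw : ∀ v, ∑ w, P v w ≤ c) (hn : 0 < n) :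
    IsUnit (1 - P) := by
  have hc0 : 0 ≤ c := le_trans (Finset.sum_nonneg fun w _ => hP0 ⟨0, hn⟩ w) (hProw ⟨0, hn⟩)
  rw [← Matrix.mulVec_injective_iff_isUnit]
  intro x₁ x₂ hx
  have hz : (1 - P) *ᵥ (x₁ - x₂) = 0 := by
    rw [Matrix.mulVec_sub, hx, sub_self]
  set z := x₁ - x₂ with hzdef
  have hz2 : ∀ i, z i = ∑ w, P i w * z w := by
    intro i
    have := congrFun hz i
    simp only [Matrix.mulVec, dotProduct, Matrix.sub_apply, Pi.zero_apply, sub_mul,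
      Finset.sum_sub_distrib, Matrix.one_apply, ite_mul, one_mul, zero_mul,
      Finset.sum_ite_eq, Finset.mem_univ, if_true] at this
    linarith
  have hne : (univ : Finset (Fin n)).Nonempty := ⟨⟨0, hn⟩, mem_univ _⟩
  obtain ⟨i, -, hi⟩ := Finset.exists_max_image univ (fun i => |z i|) hne
  have hbound : |z i| ≤ c * |z i| := by
    calc |z i| = |∑ w, P i w * z w| := by rw [← hz2]
    _ ≤ ∑ w, |P i w * z w| := Finset.abs_sum_le_sum_abs _ _
    _ = ∑ w, P i w * |z w| := by
        refine Finset.sum_congr rfl fun w _ => ?_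
        rw [abs_mul, abs_of_nonneg (hP0 i w)]
    _ ≤ ∑ w, P i w * |z i| := by
        refine Finset.sum_le_sum fun w _ => ?_
        exact mul_le_mul_of_nonneg_left (hi w (mem_univ _)) (hP0 i w)
    _ = (∑ w, P i w) * |z i| := by rw [Finset.sum_mul]
    _ ≤ c * |z i| := mul_le_mul_of_nonneg_right (hProw i) (abs_nonneg _)
  have hzi : |z i| = 0 := by nlinarith [abs_nonneg (z i)]
  have hz0 : z = 0 := by
    funext w
    have := hi w (mem_univ _)
    rw [hzi] at this
    exact abs_nonpos_iff.mp this
  exact sub_eq_zero.mp (hzdef ▸ hz0)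

private lemma aux_inv_nonneg (n : ℕ) (P Q : Matrix (Fin n) (Fin n) ℝ) (c : ℝ)
    (hc : c < 1) (hc0 : 0 ≤ c)
    (hP0 : ∀ v w, 0 ≤ P v w) (hProw : ∀ v, ∑ w, P v w ≤ c)
    (hQl : Q * (1 - P) = 1) : ∀ i j, 0 ≤ Q i j := by
  have hpow0 : ∀ N, ∀ i j, 0 ≤ (P ^ N) i j := by
    intro N
    induction N with
    | zero => intro i j; simp [Matrix.one_apply]; positivity
    | succ N ih =>
        intro i j
        rw [pow_succ, Matrix.mul_apply]
        exact Finset.sum_nonneg fun z _ => mul_nonneg (ih i z) (hP0 z j)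
  have hpowrow : ∀ N, ∀ i, ∑ j, (P ^ N) i j ≤ c ^ N := by
    intro N
    induction N with
    | zero => intro i; simp [Matrix.one_apply]
    | succ N ih =>
        intro i
        have : ∑ j, (P ^ (N+1)) i j = ∑ z, (P ^ N) i z * (∑ j, P z j) := by
          simp only [pow_succ, Matrix.mul_apply, Finset.mul_sum]
          rw [Finset.sum_comm]
        rw [this, pow_succ]
        calc ∑ z, (P ^ N) i z * (∑ j, P z j)
            ≤ ∑ z, (P ^ N) i z * c :=
              Finset.sum_le_sum fun z _ => mul_le_mul_of_nonneg_left (hProw z) (hpow0 N i z)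
          _ = (∑ z, (P ^ N) i z) * c := by rw [Finset.sum_mul]
          _ ≤ c ^ N * c := mul_le_mul_of_nonneg_right (ih i) hc0
  have hgeom : ∀ N : ℕ, (∑ k ∈ Finset.range N, P ^ k) = Q - Q * P ^ N := by
    intro N
    have h1 : (1 - P) * ∑ k ∈ Finset.range N, P ^ k = 1 - P ^ N := by
      have h := mul_geom_sum P N
      have h2 : (1 - P) * ∑ k ∈ Finset.range N, P ^ k
          = -((P - 1) * ∑ k ∈ Finset.range N, P ^ k) := by noncomm_ring
      rw [h2, h, neg_sub]
    have h2 : Q * ((1 - P) * ∑ k ∈ Finset.range N, P ^ k) = Q * (1 - P ^ N) := by rw [h1]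
    rwa [← mul_assoc, hQl, one_mul, mul_sub, mul_one] at h2
  intro i j
  set C : ℝ := ∑ z, |Q i z| with hC
  have hbd : ∀ N : ℕ, -(C * c ^ N) ≤ Q i j := by
    intro N
    have he : Q i j = (∑ k ∈ Finset.range N, (P ^ k) i j) + (Q * P ^ N) i j := by
      have := congrFun (congrFun (hgeom N) i) j
      rw [Matrix.sum_apply] at this
      simp only [Matrix.sub_apply] at this
      linarith
    have h3 : |(Q * P ^ N) i j| ≤ C * c ^ N := by
      calc |(Q * P ^ N) i j| = |∑ z, Q i z * (P ^ N) z j| := by rw [Matrix.mul_apply]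
        _ ≤ ∑ z, |Q i z * (P ^ N) z j| := Finset.abs_sum_le_sum_abs _ _
        _ = ∑ z, |Q i z| * (P ^ N) z j := by
            refine Finset.sum_congr rfl fun z _ => ?_
            rw [abs_mul, abs_of_nonneg (hpow0 N z j)]
        _ ≤ ∑ z, |Q i z| * c ^ N := by
            refine Finset.sum_le_sum fun z _ => ?_
            refine mul_le_mul_of_nonneg_left ?_ (abs_nonneg _)
            calc (P ^ N) z j ≤ ∑ w, (P ^ N) z w :=
                Finset.single_le_sum (fun w _ => hpow0 N z w) (mem_univ j)
              _ ≤ c ^ N := hpowrow N z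
        _ = C * c ^ N := by rw [hC, Finset.sum_mul]
    have h4 : 0 ≤ ∑ k ∈ Finset.range N, (P ^ k) i j :=
      Finset.sum_nonneg fun k _ => hpow0 k i j
    have := neg_abs_le ((Q * P ^ N) i j)
    linarith
  have hlim : Filter.Tendsto (fun N : ℕ => -(C * c ^ N)) Filter.atTop (nhds 0) := by
    have := (tendsto_pow_atTop_nhds_zero_of_lt_one hc0 hc).const_mul C
    simpa using this.neg
  exact le_of_tendsto' hlim hbd

end Aux2
section Core

open Matrix

set_option maxHeartbeats 1000000 in
set_option maxRecDepth 10000 in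
lemma transportVal_compl_le (n : ℕ) (d : Fin n → Fin n → ℝ)
    (d_nonneg : ∀ i j, 0 ≤ d i j) (d_self : ∀ i, d i i = 0)
    (d_symm : ∀ i j, d i j = d j i)
    (d_triangle : ∀ i j l, d i l ≤ d i j + d j l)
    (U : Finset (Fin n)) (hU : U.Nonempty) (h2 : 2 * U.card ≤ n) :
    transportVal n d Uᶜ ≤ transportVal n d U := by
  classical
  have hcard : U.card + Uᶜ.card = n := by
    simpa using U.card_add_card_compl
  set m : ℝ := (U.card : ℝ) with hmdef
  set a : ℝ := (Uᶜ.card : ℝ) with hadef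
  have hm : 0 < m := by rw [hmdef]; exact_mod_cast hU.card_pos
  have hUcle : U.card ≤ Uᶜ.card := by omega
  have hmlea : m ≤ a := by rw [hmdef, hadef]; exact_mod_cast hUcle
  have ha : 0 < a := lt_of_lt_of_le hm hmlea
  have hma : m + a = n := by rw [hmdef, hadef]; exact_mod_cast hcard
  have hn : 0 < (n : ℝ) := by rw [← hma]; positivity
  have hn1 : 0 < n := by exact_mod_cast hn
  have hmn : m / n < 1 := by rw [div_lt_one hn]; linarith
  have hmn0 : 0 ≤ m / n := by positivity
  -- the feasible set for U is nonempty
  refine le_csInf ⟨∑ i ∈ U, ∑ j, d i j * (1 / (m * n)), fun _ _ => 1 / (m * n),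
      fun i j => by positivity,
      fun i _ => by
        rw [Finset.sum_const, Finset.card_univ, Fintype.card_fin, nsmul_eq_mul]
        rw [← hmdef]
        field_simp,
      fun j => by
        rw [Finset.sum_const, nsmul_eq_mul, ← hmdef]
        field_simp,
      rfl⟩ ?_
  rintro b ⟨y, hy0, hyrow, hycol, rfl⟩
  -- the matrix P
  set P : Matrix (Fin n) (Fin n) ℝ :=
    Matrix.of (fun v w => if v ∈ U ∧ w ∈ U then m * y w v else 0) with hPdef
  have hPapp : ∀ v w, P v w = if v ∈ U ∧ w ∈ U then m * y w v else 0 := fun v w => rfl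
  have hP0 : ∀ v w, 0 ≤ P v w := by
    intro v w; rw [hPapp]
    split
    · exact mul_nonneg hm.le (hy0 w v)
    · exact le_refl 0
  have hPzl : ∀ v w, v ∉ U → P v w = 0 := by
    intro v w hv; rw [hPapp]; simp [hv]
  have hPzr : ∀ v w, w ∉ U → P v w = 0 := by
    intro v w hw; rw [hPapp]; simp [hw]
  have hProwU : ∀ v ∈ U, ∑ w, P v w = m / n := by
    intro v hv
    have : ∀ w, P v w = if w ∈ U then m * y w v else 0 := by
      intro w; rw [hPapp]; simp [hv]
    rw [Finset.sum_congr rfl fun w _ => this w, Finset.sum_ite_mem, Finset.univ_inter,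
      ← Finset.mul_sum, hycol v]
    ring
  have hProwle : ∀ v, ∑ w, P v w ≤ m / n := by
    intro v
    by_cases hv : v ∈ U
    · exact (hProwU v hv).le
    · rw [Finset.sum_congr rfl fun w _ => hPzl v w hv]
      simpa using hmn0
  -- Q = (1 - P)⁻¹
  obtain ⟨u, hu⟩ := aux_isUnit n P (m/n) hmn hP0 hProwle hn1
  set Q : Matrix (Fin n) (Fin n) ℝ := ↑u⁻¹ with hQdef
  have hQl : Q * (1 - P) = 1 := by rw [hQdef, ← hu]; exact u.inv_mul
  have hQr : (1 - P) * Q = 1 := by rw [hQdef, ← hu]; exact u.mul_inv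
  have hQ0 : ∀ i j, 0 ≤ Q i j := aux_inv_nonneg n P Q (m/n) hmn hmn0 hP0 hProwle hQl
  have hQP : Q * P = Q - 1 := by
    calc Q * P = Q - Q * (1 - P) := by noncomm_ring
      _ = Q - 1 := by rw [hQl]
  have hPQ : P * Q = Q - 1 := by
    calc P * Q = Q - (1 - P) * Q := by noncomm_ring
      _ = Q - 1 := by rw [hQr]
  have hQone : Q = 1 + Q * P := by rw [hQP]; noncomm_ring
  have hQzero : ∀ v w, v ∈ U → w ∉ U → Q v w = 0 := by
    intro v w hv hw
    have h1 : Q v w = (1 : Matrix (Fin n) (Fin n) ℝ) v w + (Q * P) v w := by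
      conv_lhs => rw [hQone]
      simp [Matrix.add_apply]
    rw [h1, Matrix.one_apply_ne (by rintro rfl; exact hw hv), Matrix.mul_apply]
    rw [Finset.sum_congr rfl fun z _ => by rw [hPzr z w hw, mul_zero]]
    simp
  have hQrowsubset : ∀ v ∈ U, ∑ z ∈ U, Q v z = ∑ z, Q v z := fun v hv =>
    Finset.sum_subset (Finset.subset_univ U) (fun z _ hz => hQzero v z hv hz)
  have hrowif : ∀ z, ∑ w, P z w = if z ∈ U then m / n else 0 := by
    intro z
    by_cases hz : z ∈ U
    · rw [hProwU z hz, if_pos hz]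
    · rw [if_neg hz, Finset.sum_congr rfl fun w _ => hPzl z w hz]
      simp
  have hQrowU : ∀ v ∈ U, ∑ w, Q v w = n / a := by
    intro v hv
    have hstep : ∑ w, Q v w = 1 + (m/n) * ∑ w, Q v w := by
      conv_lhs => rw [hQone]
      simp only [Matrix.add_apply, Finset.sum_add_distrib]
      congr 1
      · simp [Matrix.one_apply, Finset.sum_ite_eq]
      · calc ∑ w, (Q * P) v w = ∑ w, ∑ z, Q v z * P z w := by simp only [Matrix.mul_apply]
          _ = ∑ z, Q v z * (∑ w, P z w) := by
              rw [Finset.sum_comm]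
              simp only [Finset.mul_sum]
          _ = ∑ z, Q v z * (if z ∈ U then m / n else 0) := by
              simp only [hrowif]
          _ = ∑ z ∈ U, Q v z * (m/n) := by
              simp only [mul_ite, mul_zero]
              rw [Finset.sum_ite_mem, Finset.univ_inter]
          _ = (m/n) * ∑ w, Q v w := by
              rw [← Finset.sum_mul, hQrowsubset v hv, mul_comm]
    set s := ∑ w, Q v w with hs
    have h2' : (n:ℝ) * s = n + m * s := by
      have hnm : (n:ℝ) * (m / n * s) = m * s := by
        field_simp
      calc (n:ℝ) * s = n * (1 + m/n * s) := by rw [← hstep]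
        _ = n + n * (m/n * s) := by ring
        _ = n + m * s := by rw [hnm]
    have h3 : (m + a) * s = (n:ℝ) * s := by rw [hma]
    have h4 : a * s = n := by ring_nf at h3 ⊢; linarith
    rw [eq_div_iff ha.ne']
    linarith [h4]
  -- auxiliary vectors
  set g : Fin n → ℝ := fun z => ∑ w, P z w * d z w with hgdef
  set h : Fin n → ℝ := fun v => ∑ z, Q v z * g z with hhdef
  -- the key pointwise inequality
  have key : ∀ t v : Fin n, a * (∑ j, Q v j * d t j) ≤ n * (d t v + h v) := by
    intro t v
    set w1 : Fin n → ℝ := fun z => n * (d t z - (∑ w, P z w * d t w) + g z) - a * d t z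
      with hw1def
    have hw1 : ∀ z, 0 ≤ w1 z := by
      intro z
      have htri : ∑ w, P z w * d t w ≤ (∑ w, P z w) * d t z + g z := by
        calc ∑ w, P z w * d t w ≤ ∑ w, P z w * (d t z + d z w) :=
            Finset.sum_le_sum fun w _ => mul_le_mul_of_nonneg_left (d_triangle t z w) (hP0 z w)
          _ = (∑ w, P z w) * d t z + g z := by
              rw [hgdef]
              simp only [mul_add, Finset.sum_add_distrib, Finset.sum_mul]
      have hrow := hProwle z
      have hd0 := d_nonneg t z
      have h5 : (∑ w, P z w) * d t z ≤ (m/n) * d t z := mul_le_mul_of_nonneg_right hrow hd0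
      have h6 : d t z - (m/n) * d t z ≤ d t z - (∑ w, P z w * d t w) + g z := by linarith
      have h7 : (n:ℝ) * (d t z - (m/n) * d t z) ≤ n * (d t z - (∑ w, P z w * d t w) + g z) :=
        mul_le_mul_of_nonneg_left h6 hn.le
      have hnm : (n:ℝ) * ((m/n) * d t z) = m * d t z := by field_simp
      have h8 : (m + a) * d t z = (n:ℝ) * d t z := by rw [hma]
      show 0 ≤ n * (d t z - (∑ w, P z w * d t w) + g z) - a * d t z
      nlinarith [h7, hnm, h8]
    have hswap : ∑ z, Q v z * (∑ w, P z w * d t w) = (∑ w, Q v w * d t w) - d t v := by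
      calc ∑ z, Q v z * (∑ w, P z w * d t w)
          = ∑ z, ∑ w, Q v z * P z w * d t w := by
            simp only [Finset.mul_sum, mul_assoc]
        _ = ∑ w, ∑ z, Q v z * P z w * d t w := Finset.sum_comm
        _ = ∑ w, (∑ z, Q v z * P z w) * d t w := by simp only [Finset.sum_mul]
        _ = ∑ w, (Q * P) v w * d t w := by simp only [Matrix.mul_apply]
        _ = ∑ w, (Q v w - (1 : Matrix (Fin n) (Fin n) ℝ) v w) * d t w := by
            rw [hQP]; simp only [Matrix.sub_apply]
        _ = (∑ w, Q v w * d t w) - d t v := by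
            simp only [sub_mul, Finset.sum_sub_distrib, Matrix.one_apply, ite_mul, one_mul,
              zero_mul, Finset.sum_ite_eq, Finset.mem_univ, if_true]
    have hexp : ∑ z, Q v z * w1 z
        = n * (d t v + h v) - a * (∑ j, Q v j * d t j) := by
      have hterm : ∀ z, Q v z * w1 z
          = n * (Q v z * d t z) - n * (Q v z * (∑ w, P z w * d t w))
            + n * (Q v z * g z) - a * (Q v z * d t z) := by
        intro z; rw [hw1def]; ring
      rw [Finset.sum_congr rfl fun z _ => hterm z]
      simp only [Finset.sum_sub_distrib, Finset.sum_add_distrib, ← Finset.mul_sum]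
      rw [hswap, hhdef]
      ring
    have hpos : 0 ≤ ∑ z, Q v z * w1 z :=
      Finset.sum_nonneg fun z _ => mul_nonneg (hQ0 v z) (hw1 z)
    linarith [hexp ▸ hpos]
  have hnne : (n:ℝ) ≠ 0 := hn.ne'
  have hane : a ≠ 0 := ha.ne'
  have hmne : m ≠ 0 := hm.ne'
  -- the transport plan for Uᶜ
  set x : Fin n → Fin n → ℝ := fun t j =>
    if j ∈ U then m / n * (∑ v ∈ U, y v t * Q v j) else if j = t then 1 / (n:ℝ) else 0
    with hxdef
  have hxU : ∀ t j, j ∈ U → x t j = m / n * (∑ v ∈ U, y v t * Q v j) := by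
    intro t j hj; rw [hxdef]; dsimp only; rw [if_pos hj]
  have hxnU : ∀ t j, j ∉ U → x t j = if j = t then 1 / (n:ℝ) else 0 := by
    intro t j hj; rw [hxdef]; dsimp only; rw [if_neg hj]
  have hx0 : ∀ t j, 0 ≤ x t j := by
    intro t j
    by_cases hj : j ∈ U
    · rw [hxU t j hj]
      have : 0 ≤ ∑ v ∈ U, y v t * Q v j :=
        Finset.sum_nonneg fun v _ => mul_nonneg (hy0 v t) (hQ0 v j)
      exact mul_nonneg (div_nonneg hm.le hn.le) this
    · rw [hxnU t j hj]
      split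
      · positivity
      · exact le_refl 0
  -- row sums
  have hxrow : ∀ t ∈ Uᶜ, ∑ j, x t j = 1 / ((Uᶜ.card : ℕ) : ℝ) := by
    intro t ht
    rw [← Finset.sum_add_sum_compl U]
    have h1 : ∑ j ∈ U, x t j = m / (a * n) := by
      rw [Finset.sum_congr rfl (fun j hj => hxU t j hj), ← Finset.mul_sum]
      rw [Finset.sum_comm]
      have h2 : ∀ v ∈ U, ∑ j ∈ U, y v t * Q v j = y v t * (n / a) := by
        intro v hv
        rw [← Finset.mul_sum]
        congr 1
        rw [hQrowsubset v hv, hQrowU v hv]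
      rw [Finset.sum_congr rfl h2, ← Finset.sum_mul, hycol t]
      rw [div_mul_div_comm, one_mul, div_mul_div_comm]
      rw [div_eq_div_iff (by simp [hmne, hnne, hane]) (mul_ne_zero hane hnne)]
      ring
    have h3 : ∑ j ∈ Uᶜ, x t j = 1 / (n:ℝ) := by
      rw [Finset.sum_congr rfl (fun j hj => hxnU t j (Finset.mem_compl.mp hj))]
      rw [Finset.sum_ite_eq' Uᶜ t, if_pos ht]
    rw [h1, h3, ← hadef]
    rw [div_add_div _ _ (mul_ne_zero hane hnne) hnne, div_eq_div_iff (by simp [hmne, hnne, hane]) hane]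
    linear_combination (↑n * a) * hma
  have hTrow : ∀ v ∈ U, ∑ t ∈ Uᶜ, y v t = 1/m - ∑ w ∈ U, y v w := by
    intro v hv
    have hsum := Finset.sum_add_sum_compl U (y v)
    rw [hyrow v hv] at hsum
    rw [← hmdef] at hsum
    linarith
  have honeU : ∀ j ∈ U, ∑ w ∈ U, (1 : Matrix (Fin n) (Fin n) ℝ) w j = 1 := by
    intro j hj
    simp only [Matrix.one_apply]
    rw [Finset.sum_ite_eq' U j]
    rw [if_pos hj]
  -- the "P*Q" resummation trick
  have htrick : ∀ f : Fin n → ℝ,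
      ∑ v ∈ U, (∑ w ∈ U, y v w) * (∑ z, Q v z * f z)
      = (1/m) * ∑ w ∈ U, ((∑ z, Q w z * f z) - f w) := by
    intro f
    have step1 : ∀ v ∈ U, (∑ w ∈ U, y v w) * (∑ z, Q v z * f z)
        = (1/m) * ∑ w ∈ U, P w v * (∑ z, Q v z * f z) := by
      intro v hv
      rw [Finset.sum_mul, Finset.mul_sum]
      refine Finset.sum_congr rfl fun w hw => ?_
      rw [hPapp]
      rw [if_pos ⟨hw, hv⟩]
      field_simp
    rw [Finset.sum_congr rfl step1, ← Finset.mul_sum]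
    congr 1
    rw [Finset.sum_comm]
    refine Finset.sum_congr rfl fun w hw => ?_
    have hext : ∑ v ∈ U, P w v * (∑ z, Q v z * f z) = ∑ v, P w v * (∑ z, Q v z * f z) :=
      Finset.sum_subset (Finset.subset_univ U)
        (fun v _ hv => by rw [hPzr w v hv, zero_mul])
    rw [hext]
    calc ∑ v, P w v * (∑ z, Q v z * f z)
        = ∑ v, ∑ z, P w v * Q v z * f z := by
          simp only [Finset.mul_sum, mul_assoc]
      _ = ∑ z, ∑ v, P w v * Q v z * f z := Finset.sum_comm
      _ = ∑ z, (P * Q) w z * f z := by simp only [Finset.sum_mul, Matrix.mul_apply]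
      _ = ∑ z, (Q w z - (1 : Matrix (Fin n) (Fin n) ℝ) w z) * f z := by
          rw [hPQ]; simp only [Matrix.sub_apply]
      _ = (∑ z, Q w z * f z) - f w := by
          simp only [sub_mul, Finset.sum_sub_distrib, Matrix.one_apply, ite_mul, one_mul,
            zero_mul, Finset.sum_ite_eq, Finset.mem_univ, if_true]
  -- column sums
  have hxcol : ∀ j, ∑ t ∈ Uᶜ, x t j = 1 / (n:ℝ) := by
    intro j
    by_cases hj : j ∈ U
    · rw [Finset.sum_congr rfl (fun t _ => hxU t j hj), ← Finset.mul_sum]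
      have hswapc : ∑ t ∈ Uᶜ, ∑ v ∈ U, y v t * Q v j
          = ∑ v ∈ U, (∑ t ∈ Uᶜ, y v t) * Q v j := by
        rw [Finset.sum_comm]
        simp only [Finset.sum_mul]
      rw [hswapc, Finset.sum_congr rfl (fun v hv => by rw [hTrow v hv])]
      have hQj : ∀ v : Fin n, (∑ z, Q v z * if z = j then 1 else 0) = Q v j := by
        intro v
        simp only [mul_ite, mul_one, mul_zero]
        rw [Finset.sum_ite_eq' Finset.univ j (fun z => Q v z)]
        simp
      have e1 : ∑ v ∈ U, (∑ w ∈ U, y v w) * Q v j = (1/m) * ((∑ w ∈ U, Q w j) - 1) := by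
        have htr := htrick (fun z => if z = j then 1 else 0)
        calc ∑ v ∈ U, (∑ w ∈ U, y v w) * Q v j
            = ∑ v ∈ U, (∑ w ∈ U, y v w) * ∑ z, Q v z * if z = j then 1 else 0 :=
              Finset.sum_congr rfl fun v _ => by rw [hQj v]
          _ = 1 / m * ∑ w ∈ U, ((∑ z, Q w z * if z = j then 1 else 0) - if w = j then 1 else 0) :=
              htr
          _ = 1 / m * ((∑ w ∈ U, Q w j) - 1) := by
              rw [Finset.sum_sub_distrib,
                show (∑ w ∈ U, ∑ z, Q w z * if z = j then 1 else 0) = ∑ w ∈ U, Q w j from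
                  Finset.sum_congr rfl fun w _ => hQj w,
                Finset.sum_ite_eq' U j, if_pos hj]
      simp only [sub_mul, Finset.sum_sub_distrib]
      rw [e1, ← Finset.mul_sum]
      have e3 : m/↑n * ((1/m) * (∑ v ∈ U, Q v j) - (1/m) * ((∑ w ∈ U, Q w j) - 1))
          = m/↑n * (1/m) := by ring
      rw [e3]
      rw [div_mul_div_comm, mul_one, mul_comm (↑n : ℝ) m]
      rw [div_eq_div_iff (mul_ne_zero hmne hnne) hnne]
      ring
    · rw [Finset.sum_congr rfl (fun t _ => hxnU t j hj), Finset.sum_ite_eq Uᶜ j,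
        if_pos (Finset.mem_compl.mpr hj)]
  -- cost of x is at most cost of y
  have hCY0 : 0 ≤ ∑ i ∈ U, ∑ j, d i j * y i j :=
    Finset.sum_nonneg fun i _ => Finset.sum_nonneg fun j _ =>
      mul_nonneg (d_nonneg i j) (hy0 i j)
  -- rewrite the cost of x
  have hCX : ∑ t ∈ Uᶜ, ∑ j, d t j * x t j
      = m / n * ∑ t ∈ Uᶜ, ∑ v ∈ U, y v t * (∑ j ∈ U, d t j * Q v j) := by
    rw [Finset.mul_sum]
    refine Finset.sum_congr rfl fun t ht => ?_
    rw [← Finset.sum_add_sum_compl U (fun j => d t j * x t j)]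
    have hsecond : ∑ j ∈ Uᶜ, d t j * x t j = 0 := by
      rw [Finset.sum_congr rfl (fun j hj => by
        rw [hxnU t j (Finset.mem_compl.mp hj), mul_ite, mul_zero])]
      rw [Finset.sum_ite_eq' Uᶜ t, if_pos ht, d_self, zero_mul]
    rw [hsecond, add_zero]
    calc ∑ j ∈ U, d t j * x t j
        = ∑ j ∈ U, m / ↑n * ∑ v ∈ U, d t j * (y v t * Q v j) := by
          refine Finset.sum_congr rfl fun j hj => ?_
          rw [hxU t j hj, Finset.mul_sum, Finset.mul_sum, Finset.mul_sum]
          exact Finset.sum_congr rfl fun v _ => by ring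
      _ = m / ↑n * ∑ j ∈ U, ∑ v ∈ U, d t j * (y v t * Q v j) := by
          rw [Finset.mul_sum]
      _ = m / ↑n * ∑ v ∈ U, y v t * (∑ j ∈ U, d t j * Q v j) := by
          rw [Finset.sum_comm]
          refine congrArg _ (Finset.sum_congr rfl fun v _ => ?_)
          rw [Finset.mul_sum]
          refine Finset.sum_congr rfl fun j _ => by ring
  -- extend inner sums over U to sums over everything
  have hstep2 : ∀ t, ∀ v ∈ U, ∑ j ∈ U, d t j * Q v j = ∑ j, Q v j * d t j := by
    intro t v hv
    rw [Finset.sum_congr rfl (fun j _ => mul_comm (d t j) (Q v j))]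
    exact Finset.sum_subset (Finset.subset_univ U)
      (fun j _ hj => by rw [hQzero v j hv hj, zero_mul])
  -- main bound
  have hkey2 : a * (∑ t ∈ Uᶜ, ∑ v ∈ U, y v t * (∑ j ∈ U, d t j * Q v j))
      ≤ n * ∑ t ∈ Uᶜ, ∑ v ∈ U, y v t * (d t v + h v) := by
    rw [Finset.mul_sum, Finset.mul_sum]
    refine Finset.sum_le_sum fun t ht => ?_
    rw [Finset.mul_sum, Finset.mul_sum]
    refine Finset.sum_le_sum fun v hv => ?_
    rw [hstep2 t v hv]
    calc a * (y v t * (∑ j, Q v j * d t j)) = y v t * (a * ∑ j, Q v j * d t j) := by ring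
      _ ≤ y v t * (n * (d t v + h v)) :=
          mul_le_mul_of_nonneg_left (key t v) (hy0 v t)
      _ = n * (y v t * (d t v + h v)) := by ring
  -- split the right side
  have hAB : ∑ t ∈ Uᶜ, ∑ v ∈ U, y v t * (d t v + h v)
      = (∑ t ∈ Uᶜ, ∑ v ∈ U, y v t * d t v) + ∑ v ∈ U, (∑ t ∈ Uᶜ, y v t) * h v := by
    simp only [mul_add, Finset.sum_add_distrib]
    congr 1
    rw [Finset.sum_comm]
    simp only [Finset.sum_mul]
  -- the B term
  have hBterm : ∑ v ∈ U, (∑ t ∈ Uᶜ, y v t) * h v = (1/m) * ∑ w ∈ U, g w := by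
    rw [Finset.sum_congr rfl (fun v hv => by rw [hTrow v hv])]
    simp only [sub_mul, Finset.sum_sub_distrib]
    have htr := htrick g
    have hgh : ∀ v, h v = ∑ z, Q v z * g z := fun v => rfl
    rw [show (∑ v ∈ U, (∑ w ∈ U, y v w) * h v)
        = ∑ v ∈ U, (∑ w ∈ U, y v w) * ∑ z, Q v z * g z from
      Finset.sum_congr rfl fun v _ => by rw [hgh v]]
    rw [htr]
    rw [show (∑ w ∈ U, ((∑ z, Q w z * g z) - g w)) = (∑ w ∈ U, h w) - ∑ w ∈ U, g w from by
      rw [Finset.sum_sub_distrib]]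
    rw [show (∑ x ∈ U, 1/m * h x) = (1/m) * ∑ x ∈ U, h x from by rw [Finset.mul_sum]]
    ring
  -- the g sum
  have hgsum : ∑ w ∈ U, g w = m * ∑ w ∈ U, ∑ z ∈ U, y z w * d w z := by
    rw [Finset.mul_sum]
    refine Finset.sum_congr rfl fun w hw => ?_
    rw [hgdef]
    dsimp only
    have : ∀ z, P w z * d w z = if z ∈ U then m * (y z w * d w z) else 0 := by
      intro z
      by_cases hz : z ∈ U
      · rw [hPapp, if_pos ⟨hw, hz⟩, if_pos hz]; ring
      · rw [hPzr w z hz, if_neg hz, zero_mul]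
    rw [Finset.sum_congr rfl fun z _ => this z, Finset.sum_ite_mem, Finset.univ_inter,
      ← Finset.mul_sum]
  -- identify with the cost of y
  have hA : ∑ t ∈ Uᶜ, ∑ v ∈ U, y v t * d t v = ∑ i ∈ U, ∑ j ∈ Uᶜ, d i j * y i j := by
    rw [Finset.sum_comm]
    refine Finset.sum_congr rfl fun v _ => Finset.sum_congr rfl fun t _ => ?_
    rw [d_symm v t]; ring
  have hgid : ∑ w ∈ U, ∑ z ∈ U, y z w * d w z = ∑ i ∈ U, ∑ j ∈ U, d i j * y i j := by
    rw [Finset.sum_comm]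
    refine Finset.sum_congr rfl fun z _ => Finset.sum_congr rfl fun w _ => ?_
    rw [d_symm z w]; ring
  have hCYsplit : ∑ i ∈ U, ∑ j, d i j * y i j
      = (∑ i ∈ U, ∑ j ∈ U, d i j * y i j) + ∑ i ∈ U, ∑ j ∈ Uᶜ, d i j * y i j := by
    rw [← Finset.sum_add_distrib]
    exact Finset.sum_congr rfl fun i _ =>
      (Finset.sum_add_sum_compl U (fun j => d i j * y i j)).symm
  -- put it all together
  have hfinal : a * (∑ t ∈ Uᶜ, ∑ j, d t j * x t j) ≤ m * ∑ i ∈ U, ∑ j, d i j * y i j := by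
    rw [hCX]
    calc a * (m / ↑n * ∑ t ∈ Uᶜ, ∑ v ∈ U, y v t * (∑ j ∈ U, d t j * Q v j))
        = m / ↑n * (a * ∑ t ∈ Uᶜ, ∑ v ∈ U, y v t * (∑ j ∈ U, d t j * Q v j)) := by ring
      _ ≤ m / ↑n * (↑n * ∑ t ∈ Uᶜ, ∑ v ∈ U, y v t * (d t v + h v)) :=
          mul_le_mul_of_nonneg_left hkey2 (div_nonneg hm.le hn.le)
      _ = m * ∑ t ∈ Uᶜ, ∑ v ∈ U, y v t * (d t v + h v) := by
          rw [← mul_assoc, div_mul_cancel₀ m hnne]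
      _ = m * ((∑ t ∈ Uᶜ, ∑ v ∈ U, y v t * d t v) + (1/m) * ∑ w ∈ U, g w) := by
          rw [hAB, hBterm]
      _ = m * (∑ t ∈ Uᶜ, ∑ v ∈ U, y v t * d t v) + ∑ w ∈ U, g w := by
          field_simp
      _ = m * (∑ i ∈ U, ∑ j ∈ Uᶜ, d i j * y i j) + m * ∑ i ∈ U, ∑ j ∈ U, d i j * y i j := by
          rw [hA, hgsum, hgid]
      _ = m * ∑ i ∈ U, ∑ j, d i j * y i j := by rw [hCYsplit]; ring
  have hcost : ∑ t ∈ Uᶜ, ∑ j, d t j * x t j ≤ ∑ i ∈ U, ∑ j, d i j * y i j := by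
    have h1 : a * (∑ t ∈ Uᶜ, ∑ j, d t j * x t j) ≤ a * ∑ i ∈ U, ∑ j, d i j * y i j :=
      le_trans hfinal (mul_le_mul_of_nonneg_right hmlea hCY0)
    exact le_of_mul_le_mul_left h1 ha
  exact le_trans (transportVal_le d_nonneg Uᶜ x hx0 hxrow hxcol) hcost

end Core
/-- On an `n`-point metric space,
`∑_{k=1}^n E_{S_k ~ U_k}[M(S_k)] ≤ 2 ∑_{k=1}^{⌊n/2⌋} E_{S_k ~ U_k}[M(S_k)]`,
where `U_k` is the uniform distribution over `k`-subsets. -/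
theorem stmt_15 (n : ℕ) (d : Fin n → Fin n → ℝ)
    (d_nonneg : ∀ i j, 0 ≤ d i j) (d_self : ∀ i, d i i = 0)
    (d_symm : ∀ i j, d i j = d j i)
    (d_triangle : ∀ i j l, d i l ≤ d i j + d j l) :
    ∑ k ∈ Finset.Icc 1 n,
        (∑ T ∈ Finset.univ.powersetCard k, transportVal n d T) / (n.choose k : ℝ) ≤
      2 * ∑ k ∈ Finset.Icc 1 (n / 2),
        (∑ T ∈ Finset.univ.powersetCard k, transportVal n d T) / (n.choose k : ℝ) := by
  classical
  rcases Nat.eq_zero_or_pos n with hn0 | hn1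
  · subst hn0; simp
  set E : ℕ → ℝ := fun k =>
    (∑ T ∈ Finset.univ.powersetCard k, transportVal n d T) / (n.choose k : ℝ) with hE
  have hE0 : ∀ k, 0 ≤ E k := fun k =>
    div_nonneg (Finset.sum_nonneg fun T _ => transportVal_nonneg d_nonneg T)
      (Nat.cast_nonneg _)
  have hEn : E n = 0 := by
    rw [hE]
    dsimp only
    rw [show (Finset.univ : Finset (Fin n)).powersetCard n = {Finset.univ} from by
      simpa using Finset.powersetCard_self (Finset.univ : Finset (Fin n))]
    rw [Finset.sum_singleton, transportVal_univ_eq_zero d_nonneg d_self, zero_div]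
  have key : ∀ j, 1 ≤ j → j < n - n / 2 → E (n - j) ≤ E j := by
    intro j hj1 hj2
    have hjn : j ≤ n := by omega
    have h2j : 2 * j ≤ n := by omega
    rw [hE]
    dsimp only
    have hchoose : (n.choose (n - j) : ℝ) = (n.choose j : ℝ) := by
      rw [Nat.choose_symm hjn]
    rw [hchoose]
    have hcpos : (0:ℝ) < (n.choose j : ℝ) := by
      exact_mod_cast Nat.choose_pos hjn
    rw [div_le_div_iff_of_pos_right hcpos]
    have heq : ∑ T ∈ Finset.univ.powersetCard (n - j), transportVal n d T
        = ∑ S ∈ Finset.univ.powersetCard j, transportVal n d Sᶜ := by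
      refine Finset.sum_nbij' (fun T => Tᶜ) (fun S => Sᶜ) ?_ ?_ ?_ ?_ ?_
      · intro T hT
        rw [Finset.mem_powersetCard_univ] at hT ⊢
        rw [Finset.card_compl, Fintype.card_fin, hT]
        omega
      · intro S hS
        rw [Finset.mem_powersetCard_univ] at hS ⊢
        rw [Finset.card_compl, Fintype.card_fin, hS]
      · intro T _
        simp
      · intro S _
        simp
      · intro T _
        rw [compl_compl]
    rw [heq]
    refine Finset.sum_le_sum fun S hS => ?_
    rw [Finset.mem_powersetCard_univ] at hS
    have hSne : S.Nonempty := by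
      rw [← Finset.card_pos, hS]; omega
    exact transportVal_compl_le n d d_nonneg d_self d_symm d_triangle S hSne (by omega)
  have hsplit : ∑ k ∈ Finset.Icc 1 n, E k
      = ∑ k ∈ Finset.Icc 1 (n / 2), E k + ∑ k ∈ Finset.Ioc (n / 2) n, E k := by
    rw [show Finset.Icc 1 n = Finset.Ioc 0 n from by rw [← Finset.Icc_add_one_left_eq_Ioc, zero_add],
        show Finset.Icc 1 (n / 2) = Finset.Ioc 0 (n / 2) from by rw [← Finset.Icc_add_one_left_eq_Ioc, zero_add]]
    exact (Finset.sum_Ioc_consecutive E (Nat.zero_le _) (Nat.div_le_self n 2)).symm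
  have hB : ∑ k ∈ Finset.Ioc (n / 2) n, E k ≤ ∑ k ∈ Finset.Icc 1 (n / 2), E k := by
    have hre : ∑ k ∈ Finset.Ioc (n / 2) n, E k
        = ∑ j ∈ Finset.Ico 0 (n - n / 2), E (n - j) := by
      refine Finset.sum_nbij' (fun k => n - k) (fun j => n - j) ?_ ?_ ?_ ?_ ?_
      · intro k hk
        rw [Finset.mem_Ioc] at hk
        rw [Finset.mem_Ico]
        omega
      · intro j hj
        rw [Finset.mem_Ico] at hj
        rw [Finset.mem_Ioc]
        omega
      · intro k hk
        rw [Finset.mem_Ioc] at hk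
        omega
      · intro j hj
        rw [Finset.mem_Ico] at hj
        omega
      · intro k hk
        rw [Finset.mem_Ioc] at hk
        congr 1
        omega
    rw [hre]
    have hsplit0 : ∑ j ∈ Finset.Ico 0 (n - n / 2), E (n - j)
        = E n + ∑ j ∈ Finset.Ico 1 (n - n / 2), E (n - j) := by
      have h1 : (1:ℕ) ≤ n - n / 2 := by omega
      rw [← Finset.sum_Ico_consecutive (fun j => E (n - j)) (Nat.zero_le 1) h1]
      congr 1
      rw [show Finset.Ico 0 1 = {0} from rfl, Finset.sum_singleton, Nat.sub_zero]
    rw [hsplit0, hEn, zero_add]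
    calc ∑ j ∈ Finset.Ico 1 (n - n / 2), E (n - j)
        ≤ ∑ j ∈ Finset.Ico 1 (n - n / 2), E j := by
          refine Finset.sum_le_sum fun j hj => ?_
          rw [Finset.mem_Ico] at hj
          exact key j hj.1 hj.2
      _ ≤ ∑ k ∈ Finset.Icc 1 (n / 2), E k := by
          refine Finset.sum_le_sum_of_subset_of_nonneg ?_ (fun k _ _ => hE0 k)
          intro j hj
          rw [Finset.mem_Ico] at hj
          rw [Finset.mem_Icc]
          omega
  have h1 := hsplit
  have h2 := hB
  have h3 := Finset.sum_nonneg (fun k (_ : k ∈ Finset.Icc 1 (n / 2)) => hE0 k)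
  rw [hE] at h1 h2 h3 ⊢
  dsimp only at h1 h2 h3 ⊢
  linarith
end

section
/- For the max-weight perfect matching problem under i.i.d. arrivals, the fair-bias algorithm that at each step with k free servers matches according to an optimal solution of the max-weight transportation LP M(S_k) achieves expected weight at least (1/2)·E[OPT], using: (i) E_{S_k~U_k}[M(S_k)] ≥ (k/n)·M(S), (ii) E[OPT] ≤ n·M(S), and (iii) ∑_{k=1}^n k/n² ≥ 1/2. -/
open Finset

/-- `maxTransport n m w p T`: the optimal value of the max-weight transportation LP
between the set `T` of free servers (each with supply `1/|T|`) and the request types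
(type `j` with demand `p j`), with weights `w`. -/
noncomputable def maxTransport (n m : ℕ) (w : Fin n → Fin m → ℝ) (p : Fin m → ℝ)
    (T : Finset (Fin n)) : ℝ :=
  sSup {c : ℝ | ∃ x : Fin n → Fin m → ℝ,
    (∀ i j, 0 ≤ x i j) ∧
    (∀ i ∈ T, ∑ j, x i j = 1 / (T.card : ℝ)) ∧
    (∀ j, ∑ i ∈ T, x i j = p j) ∧
    c = ∑ i ∈ T, ∑ j, w i j * x i j}

/-- The weight of a max-weight perfect matching of the `n` realized requests `req`
to the `n` servers. -/
noncomputable def maxPerfMatch (n m : ℕ) (w : Fin n → Fin m → ℝ)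
    (req : Fin n → Fin m) : ℝ :=
  sSup {c : ℝ | ∃ π : Fin n ≃ Fin n, c = ∑ a : Fin n, w (π a) (req a)}

section Aux
variable {n m : ℕ}
lemma transport_bdd (w : Fin n → Fin m → ℝ) (hw : ∀ i j, 0 ≤ w i j) (p : Fin m → ℝ)
    (T : Finset (Fin n)) :
    BddAbove {c : ℝ | ∃ x : Fin n → Fin m → ℝ,
      (∀ i j, 0 ≤ x i j) ∧
      (∀ i ∈ T, ∑ j, x i j = 1 / (T.card : ℝ)) ∧
      (∀ j, ∑ i ∈ T, x i j = p j) ∧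
      c = ∑ i ∈ T, ∑ j, w i j * x i j} := by
  refine ⟨∑ i, ∑ j, w i j, ?_⟩
  rintro c ⟨x, hx0, hrow, hcol, rfl⟩
  rcases eq_or_ne T.card 0 with h0 | h0
  · rw [Finset.card_eq_zero.mp h0]
    simp only [Finset.sum_empty]
    exact Finset.sum_nonneg fun i _ => Finset.sum_nonneg fun j _ => hw i j
  · have hT1 : (1:ℝ) ≤ (T.card : ℝ) := by exact_mod_cast Nat.one_le_iff_ne_zero.mpr h0
    calc ∑ i ∈ T, ∑ j, w i j * x i j
        ≤ ∑ i ∈ T, ∑ j, w i j * (1 / (T.card:ℝ)) := by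
          refine Finset.sum_le_sum fun i hi => Finset.sum_le_sum fun j _ => ?_
          refine mul_le_mul_of_nonneg_left ?_ (hw i j)
          calc x i j ≤ ∑ j', x i j' :=
                Finset.single_le_sum (fun j' _ => hx0 i j') (mem_univ j)
            _ = 1 / (T.card:ℝ) := hrow i hi
      _ ≤ ∑ i ∈ T, ∑ j, w i j * 1 := by
          refine Finset.sum_le_sum fun i _ => Finset.sum_le_sum fun j _ => ?_
          refine mul_le_mul_of_nonneg_left ?_ (hw i j)
          rw [div_le_one (by linarith)]
          exact hT1
      _ ≤ ∑ i, ∑ j, w i j := by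
          simp only [mul_one]
          exact Finset.sum_le_sum_of_subset_of_nonneg (subset_univ T)
            (fun i _ _ => Finset.sum_nonneg fun j _ => hw i j)

lemma maxPerfMatch_exists (w : Fin n → Fin m → ℝ) (req : Fin n → Fin m) :
    ∃ π : Fin n ≃ Fin n, maxPerfMatch n m w req = ∑ a, w (π a) (req a) := by
  have hfin : ({c : ℝ | ∃ π : Fin n ≃ Fin n, c = ∑ a, w (π a) (req a)}).Finite := by
    have : {c : ℝ | ∃ π : Fin n ≃ Fin n, c = ∑ a, w (π a) (req a)} =
        Set.range (fun π : Fin n ≃ Fin n => ∑ a, w (π a) (req a)) := by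
      ext c; simp [eq_comm]
    rw [this]; exact Set.finite_range _
  have hne : ({c : ℝ | ∃ π : Fin n ≃ Fin n, c = ∑ a, w (π a) (req a)}).Nonempty :=
    ⟨_, ⟨Equiv.refl _, rfl⟩⟩
  exact hne.csSup_mem hfin
lemma sum_prod_one (p : Fin m → ℝ) (hpsum : ∑ j, p j = 1) :
    ∑ req : Fin n → Fin m, ∏ b, p (req b) = 1 := by
  classical
  rw [← Fintype.piFinset_univ, ← Finset.prod_univ_sum]
  simp [hpsum]

lemma sum_prod_marg (p : Fin m → ℝ) (hpsum : ∑ j, p j = 1) (a : Fin n) (j0 : Fin m) :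
    ∑ req : Fin n → Fin m, (∏ b, p (req b)) * (if req a = j0 then (1:ℝ) else 0) = p j0 := by
  classical
  have key : ∀ req : Fin n → Fin m,
      (∏ b, p (req b)) * (if req a = j0 then (1:ℝ) else 0)
        = ∏ b, (fun b j => if b = a then (if j = j0 then p j else 0) else p j) b (req b) := by
    intro req
    by_cases h : req a = j0
    · rw [if_pos h, mul_one]
      refine Finset.prod_congr rfl fun b _ => ?_
      by_cases hb : b = a
      · subst hb; simp [h]
      · simp [hb]
    · rw [if_neg h, mul_zero]
      symm
      apply Finset.prod_eq_zero (Finset.mem_univ a)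
      simp [h]
  have h2 := Finset.prod_univ_sum (κ := fun _ : Fin n => Fin m) (fun _ => univ)
    (fun b j => if b = a then (if j = j0 then p j else 0) else p j)
  rw [Finset.sum_congr rfl fun req _ => key req, ← Fintype.piFinset_univ, ← h2]
  have h1 : ∀ b : Fin n,
      (∑ j, (if b = a then (if j = j0 then p j else 0) else p j)) =
        if b = a then p j0 else 1 := by
    intro b
    by_cases hb : b = a <;> simp [hb, hpsum]
  rw [Finset.prod_congr rfl fun b _ => h1 b]
  simp
lemma EOPT_le (hn : 0 < n) (w : Fin n → Fin m → ℝ) (hw : ∀ i j, 0 ≤ w i j)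
    (p : Fin m → ℝ) (hp : ∀ j, 0 ≤ p j) (hpsum : ∑ j, p j = 1) :
    ∑ req : Fin n → Fin m, (∏ a, p (req a)) * maxPerfMatch n m w req
      ≤ n * maxTransport n m w p Finset.univ := by
  classical
  choose π hπ using fun req => maxPerfMatch_exists w req
  set P : (Fin n → Fin m) → ℝ := fun req => ∏ b, p (req b) with hP
  have hP0 : ∀ req, 0 ≤ P req := fun req => Finset.prod_nonneg fun b _ => hp _
  have hn' : (0:ℝ) < n := by exact_mod_cast hn
  set x : Fin n → Fin m → ℝ := fun i j =>
    (1/n) * ∑ req : Fin n → Fin m, P req *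
      ∑ a, (if π req a = i then (1:ℝ) else 0) * (if req a = j then (1:ℝ) else 0) with hxdef
  have hx0 : ∀ i j, 0 ≤ x i j := by
    intro i j
    refine mul_nonneg (by positivity) (Finset.sum_nonneg fun req _ => ?_)
    refine mul_nonneg (hP0 req) (Finset.sum_nonneg fun a _ => ?_)
    split_ifs <;> norm_num
  have hinner1 : ∀ (req : Fin n → Fin m) i,
      ∑ j, ∑ a, (if π req a = i then (1:ℝ) else 0) * (if req a = j then 1 else 0)
        = ∑ a, (if π req a = i then (1:ℝ) else 0) := by
    intro req i
    rw [Finset.sum_comm]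
    refine Finset.sum_congr rfl fun a _ => ?_
    rw [← Finset.mul_sum]
    simp
  have hperm : ∀ (req : Fin n → Fin m) i,
      ∑ a, (if π req a = i then (1:ℝ) else 0) = 1 := by
    intro req i
    simp only [Equiv.apply_eq_iff_eq_symm_apply]
    simp
  have hrow : ∀ i, ∑ j, x i j = 1/(n:ℝ) := by
    intro i
    have h : ∑ j, x i j = (1/n) * ∑ req : Fin n → Fin m, P req := by
      simp only [hxdef]
      rw [← Finset.mul_sum]
      congr 1
      rw [Finset.sum_comm]
      refine Finset.sum_congr rfl fun req _ => ?_
      rw [← Finset.mul_sum, hinner1 req i, hperm req i, mul_one]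
    rw [h, sum_prod_one p hpsum, mul_one]
  have hcol : ∀ j, ∑ i, x i j = p j := by
    intro j
    have h1 : ∑ i, x i j = (1/n) * ∑ req : Fin n → Fin m,
        P req * ∑ a, (if req a = j then (1:ℝ) else 0) := by
      simp only [hxdef]
      rw [← Finset.mul_sum]
      congr 1
      rw [Finset.sum_comm]
      refine Finset.sum_congr rfl fun req _ => ?_
      rw [← Finset.mul_sum]
      congr 1
      rw [Finset.sum_comm]
      refine Finset.sum_congr rfl fun a _ => ?_
      rw [← Finset.sum_mul]
      simp
    rw [h1]
    have h2 : ∑ req : Fin n → Fin m, P req * ∑ a, (if req a = j then (1:ℝ) else 0)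
        = ∑ a : Fin n, ∑ req : Fin n → Fin m, P req * (if req a = j then (1:ℝ) else 0) := by
      rw [Finset.sum_comm]
      exact Finset.sum_congr rfl fun req _ => Finset.mul_sum _ _ _
    rw [h2, Finset.sum_congr rfl fun a _ => sum_prod_marg p hpsum a j,
      Finset.sum_const, card_univ, Fintype.card_fin, nsmul_eq_mul]
    field_simp
  have hinner3 : ∀ (req : Fin n → Fin m) a,
      ∑ i, ∑ j, (1/(n:ℝ)) * P req *
        (w i j * ((if π req a = i then (1:ℝ) else 0) * (if req a = j then 1 else 0)))
        = (1/(n:ℝ)) * P req * w (π req a) (req a) := by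
    intro req a
    simp [mul_ite, ite_mul, Finset.sum_ite_eq, Finset.sum_ite_eq']
  have hval : ∑ i, ∑ j, w i j * x i j
      = (1/n) * ∑ req : Fin n → Fin m, P req * ∑ a, w (π req a) (req a) := by
    calc ∑ i, ∑ j, w i j * x i j
        = ∑ i, ∑ j, ∑ req : Fin n → Fin m, ∑ a, (1/(n:ℝ)) * P req *
            (w i j * ((if π req a = i then (1:ℝ) else 0) * (if req a = j then 1 else 0))) := by
          refine Finset.sum_congr rfl fun i _ => Finset.sum_congr rfl fun j _ => ?_
          simp only [hxdef, Finset.mul_sum]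
          exact Finset.sum_congr rfl fun req _ => Finset.sum_congr rfl fun a _ => by ring
      _ = ∑ req : Fin n → Fin m, ∑ a, ∑ i, ∑ j, (1/(n:ℝ)) * P req *
            (w i j * ((if π req a = i then (1:ℝ) else 0) * (if req a = j then 1 else 0))) := by
          rw [Finset.sum_congr rfl fun i _ => Finset.sum_comm, Finset.sum_comm]
          refine Finset.sum_congr rfl fun req _ => ?_
          rw [Finset.sum_congr rfl fun i _ => Finset.sum_comm, Finset.sum_comm]
      _ = ∑ req : Fin n → Fin m, ∑ a, (1/(n:ℝ)) * P req * w (π req a) (req a) := by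
          exact Finset.sum_congr rfl fun req _ =>
            Finset.sum_congr rfl fun a _ => hinner3 req a
      _ = (1/n) * ∑ req : Fin n → Fin m, P req * ∑ a, w (π req a) (req a) := by
          rw [Finset.mul_sum]
          refine Finset.sum_congr rfl fun req _ => ?_
          rw [Finset.mul_sum, Finset.mul_sum]
          refine Finset.sum_congr rfl fun a _ => ?_
          ring
  have hmem : (1/(n:ℝ)) * ∑ req : Fin n → Fin m, P req * ∑ a, w (π req a) (req a) ∈
      {c : ℝ | ∃ x : Fin n → Fin m → ℝ,
        (∀ i j, 0 ≤ x i j) ∧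
        (∀ i ∈ (univ : Finset (Fin n)), ∑ j, x i j = 1 / ((univ : Finset (Fin n)).card : ℝ)) ∧
        (∀ j, ∑ i ∈ (univ : Finset (Fin n)), x i j = p j) ∧
        c = ∑ i ∈ (univ : Finset (Fin n)), ∑ j, w i j * x i j} := by
    refine ⟨x, hx0, fun i _ => ?_, fun j => hcol j, hval.symm⟩
    rw [hrow i, card_univ, Fintype.card_fin]
  have hle := le_csSup (transport_bdd w hw p univ) hmem
  have : ∑ req : Fin n → Fin m, (∏ a, p (req a)) * maxPerfMatch n m w req
      = ∑ req : Fin n → Fin m, P req * ∑ a, w (π req a) (req a) := by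
    exact Finset.sum_congr rfl fun req _ => by rw [hπ req]
  rw [this, maxTransport]
  have h2 : (∑ req : Fin n → Fin m, P req * ∑ a, w (π req a) (req a))
      = n * ((1/(n:ℝ)) * ∑ req : Fin n → Fin m, P req * ∑ a, w (π req a) (req a)) := by
    field_simp
  rw [h2]
  exact mul_le_mul_of_nonneg_left hle hn'.le
lemma card_subsets_mem (i : Fin n) (k : ℕ) (hk : 1 ≤ k) :
    ((Finset.univ.powersetCard k).filter (fun T => i ∈ T)).card
      = (n-1).choose (k-1) := by
  classical
  have hce : #(Finset.univ.erase i) = n - 1 := by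
    rw [Finset.card_erase_of_mem (Finset.mem_univ i), Finset.card_univ, Fintype.card_fin]
  rw [← hce, ← Finset.card_powersetCard]
  refine Finset.card_bij' (fun T _ => T.erase i) (fun S _ => insert i S) ?_ ?_ ?_ ?_
  · intro T hT
    rw [Finset.mem_filter, Finset.mem_powersetCard] at hT
    obtain ⟨⟨_, hcard⟩, hiT⟩ := hT
    rw [Finset.mem_powersetCard]
    exact ⟨fun a ha => Finset.mem_erase.mpr
      ⟨(Finset.mem_erase.mp ha).1, Finset.mem_univ _⟩,
      by rw [Finset.card_erase_of_mem hiT, hcard]⟩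
  · intro S hS
    rw [Finset.mem_powersetCard] at hS
    obtain ⟨hsub, hcard⟩ := hS
    have hiS : i ∉ S := fun h => (Finset.mem_erase.mp (hsub h)).1 rfl
    rw [Finset.mem_filter, Finset.mem_powersetCard]
    refine ⟨⟨Finset.subset_univ _, ?_⟩, Finset.mem_insert_self _ _⟩
    rw [Finset.card_insert_of_notMem hiS, hcard]
    omega
  · intro T hT
    rw [Finset.mem_filter] at hT
    exact Finset.insert_erase hT.2
  · intro S hS
    rw [Finset.mem_powersetCard] at hS
    have hiS : i ∉ S := fun h => (Finset.mem_erase.mp (hS.1 h)).1 rfl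
    exact Finset.erase_insert hiS

lemma sum_subsets (k : ℕ) (hk : 1 ≤ k) (f : Fin n → ℝ) :
    ∑ T ∈ Finset.univ.powersetCard k, ∑ i ∈ T, f i
      = ((n-1).choose (k-1) : ℝ) * ∑ i, f i := by
  classical
  have h1 : ∀ T : Finset (Fin n), ∑ i ∈ T, f i
      = ∑ i, (if i ∈ T then f i else 0) := by
    intro T
    rw [Finset.sum_ite_mem, Finset.univ_inter]
  rw [Finset.sum_congr rfl fun T _ => h1 T, Finset.sum_comm]
  rw [Finset.mul_sum]
  refine Finset.sum_congr rfl fun i _ => ?_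
  rw [Finset.sum_ite, Finset.sum_const_zero, add_zero, Finset.sum_const,
    card_subsets_mem i k hk, nsmul_eq_mul]

lemma avg_ge (w : Fin n → Fin m → ℝ) (hw : ∀ i j, 0 ≤ w i j) (p : Fin m → ℝ)
    (k : ℕ) (hk1 : 1 ≤ k) (hkn : k ≤ n)
    (x : Fin n → Fin m → ℝ) (hx0 : ∀ i j, 0 ≤ x i j)
    (hrow : ∀ i, ∑ j, x i j = 1/(n:ℝ)) (hcol : ∀ j, ∑ i, x i j = p j) :
    ((k:ℝ)/n) * (∑ i, ∑ j, w i j * x i j)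
      ≤ (∑ T ∈ Finset.univ.powersetCard k, maxTransport n m w p T)
          / (n.choose k : ℝ) := by
  classical
  have hn1 : 1 ≤ n := le_trans hk1 hkn
  have hn' : (0:ℝ) < n := by exact_mod_cast hn1
  have hk' : (0:ℝ) < k := by exact_mod_cast hk1
  have hck : (0:ℝ) < (n.choose k : ℝ) := by exact_mod_cast Nat.choose_pos hkn
  -- per-subset bound
  have key : ∀ T ∈ Finset.univ.powersetCard k,
      ∑ i ∈ T, ∑ j, w i j * x i j ≤ maxTransport n m w p T := by
    intro T hT
    rw [Finset.mem_powersetCard] at hT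
    obtain ⟨-, hcard⟩ := hT
    have hTk : (T.card : ℝ) = k := by rw [hcard]
    set y : Fin n → Fin m → ℝ := fun i j =>
      if i ∈ T then x i j + (1/(k:ℝ)) * ∑ i' ∈ Tᶜ, x i' j else 0 with hy
    have hy0 : ∀ i j, 0 ≤ y i j := by
      intro i j
      simp only [hy]
      split_ifs
      · exact add_nonneg (hx0 i j) (mul_nonneg (by positivity)
          (Finset.sum_nonneg fun i' _ => hx0 i' j))
      · exact le_refl 0
    have hyrow : ∀ i ∈ T, ∑ j, y i j = 1/(T.card:ℝ) := by
      intro i hi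
      simp only [hy, if_pos hi]
      rw [Finset.sum_add_distrib, hrow i, ← Finset.mul_sum, Finset.sum_comm]
      have h2 : ∑ i' ∈ Tᶜ, ∑ j, x i' j = ((n:ℝ) - k) / n := by
        rw [Finset.sum_congr rfl fun i' _ => hrow i']
        rw [Finset.sum_const, Finset.card_compl, hcard, Fintype.card_fin, nsmul_eq_mul]
        rw [Nat.cast_sub hkn]
        ring
      rw [h2, hTk]
      field_simp
      ring
    have hycol : ∀ j, ∑ i ∈ T, y i j = p j := by
      intro j
      have : ∀ i ∈ T, y i j = x i j + (1/(k:ℝ)) * ∑ i' ∈ Tᶜ, x i' j := by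
        intro i hi; simp only [hy, if_pos hi]
      rw [Finset.sum_congr rfl this, Finset.sum_add_distrib, Finset.sum_const,
        hcard, nsmul_eq_mul]
      have : (k:ℝ) * ((1/(k:ℝ)) * ∑ i' ∈ Tᶜ, x i' j) = ∑ i' ∈ Tᶜ, x i' j := by
        field_simp
      rw [this, Finset.sum_add_sum_compl, hcol j]
    have hmem : (∑ i ∈ T, ∑ j, w i j * y i j) ∈
        {c : ℝ | ∃ z : Fin n → Fin m → ℝ,
          (∀ i j, 0 ≤ z i j) ∧
          (∀ i ∈ T, ∑ j, z i j = 1 / (T.card : ℝ)) ∧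
          (∀ j, ∑ i ∈ T, z i j = p j) ∧
          c = ∑ i ∈ T, ∑ j, w i j * z i j} :=
      ⟨y, hy0, hyrow, hycol, rfl⟩
    have hle := le_csSup (transport_bdd w hw p T) hmem
    refine le_trans ?_ hle
    refine Finset.sum_le_sum fun i hi => Finset.sum_le_sum fun j _ => ?_
    refine mul_le_mul_of_nonneg_left ?_ (hw i j)
    simp only [hy, if_pos hi]
    have : 0 ≤ (1/(k:ℝ)) * ∑ i' ∈ Tᶜ, x i' j :=
      mul_nonneg (by positivity) (Finset.sum_nonneg fun i' _ => hx0 i' j)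
    linarith
  -- sum over subsets
  have hsum : ((n-1).choose (k-1) : ℝ) * (∑ i, ∑ j, w i j * x i j)
      ≤ ∑ T ∈ Finset.univ.powersetCard k, maxTransport n m w p T := by
    rw [← sum_subsets k hk1 (fun i => ∑ j, w i j * x i j)]
    exact Finset.sum_le_sum key
  have hchoose : (n:ℝ) * ((n-1).choose (k-1) : ℝ) = (n.choose k : ℝ) * k := by
    have h := Nat.add_one_mul_choose_eq (n-1) (k-1)
    have e1 : n - 1 + 1 = n := by omega
    have e2 : k - 1 + 1 = k := by omega
    rw [e1, e2] at h
    exact_mod_cast h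
  rw [le_div_iff₀ hck]
  calc ((k:ℝ)/n) * (∑ i, ∑ j, w i j * x i j) * (n.choose k : ℝ)
      = ((n.choose k : ℝ) * k / n) * (∑ i, ∑ j, w i j * x i j) := by ring
    _ = ((n-1).choose (k-1) : ℝ) * (∑ i, ∑ j, w i j * x i j) := by
        rw [← hchoose]; field_simp
    _ ≤ _ := hsum
lemma gauss_icc (N : ℕ) : (∑ k ∈ Icc 1 N, (k:ℝ)) * 2 = N * (N+1) := by
  induction N with
  | zero => simp
  | succ N ih =>
      rw [Finset.sum_Icc_succ_top (by omega)]
      push_cast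
      push_cast at ih
      linarith
end Aux

/-- For max-weight perfect matching under i.i.d. arrivals, the fair-bias algorithm —
whose expected weight equals `∑_{k=1}^n E_{S_k ~ U_k}[M(S_k)]` by the structure lemma —
achieves at least half of the expected offline optimum `E[OPT]`. -/
theorem stmt_19 (n m : ℕ) (hn : 0 < n) (w : Fin n → Fin m → ℝ)
    (hw : ∀ i j, 0 ≤ w i j) (p : Fin m → ℝ) (hp : ∀ j, 0 ≤ p j)
    (hpsum : ∑ j, p j = 1) :
    (1 / 2) * (∑ req : Fin n → Fin m,
        (∏ a : Fin n, p (req a)) * maxPerfMatch n m w req) ≤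
      ∑ k ∈ Finset.Icc 1 n,
        (∑ T ∈ Finset.univ.powersetCard k, maxTransport n m w p T) /
          (n.choose k : ℝ) := by
  classical
  have hn' : (0:ℝ) < n := by exact_mod_cast hn
  set M := maxTransport n m w p (univ : Finset (Fin n)) with hM
  -- canonical feasible point
  have hmem0 : (∑ i : Fin n, ∑ j, w i j * (p j / n)) ∈
      {c : ℝ | ∃ x : Fin n → Fin m → ℝ,
        (∀ i j, 0 ≤ x i j) ∧
        (∀ i ∈ (univ : Finset (Fin n)), ∑ j, x i j = 1 / ((univ : Finset (Fin n)).card : ℝ)) ∧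
        (∀ j, ∑ i ∈ (univ : Finset (Fin n)), x i j = p j) ∧
        c = ∑ i ∈ (univ : Finset (Fin n)), ∑ j, w i j * x i j} := by
    refine ⟨fun _ j => p j / n, fun i j => div_nonneg (hp j) hn'.le, fun i _ => ?_, fun j => ?_, rfl⟩
    · rw [← Finset.sum_div, hpsum, card_univ, Fintype.card_fin]
    · rw [Finset.sum_const, card_univ, Fintype.card_fin, nsmul_eq_mul]
      field_simp
  have hM0 : 0 ≤ M := by
    refine le_trans ?_ (le_csSup (transport_bdd w hw p univ) hmem0)
    exact Finset.sum_nonneg fun i _ => Finset.sum_nonneg fun j _ =>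
      mul_nonneg (hw i j) (div_nonneg (hp j) hn'.le)
  have hEle := EOPT_le hn w hw p hp hpsum
  have hk : ∀ k ∈ Finset.Icc 1 n, ((k:ℝ)/n) * M ≤
      (∑ T ∈ Finset.univ.powersetCard k, maxTransport n m w p T) / (n.choose k : ℝ) := by
    intro k hkk
    rw [Finset.mem_Icc] at hkk
    obtain ⟨hk1, hkn⟩ := hkk
    have hkpos : (0:ℝ) < (k:ℝ)/n := by positivity
    have hsup : M ≤ ((n:ℝ)/k) *
        ((∑ T ∈ Finset.univ.powersetCard k, maxTransport n m w p T) / (n.choose k : ℝ)) := by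
      rw [hM, maxTransport]
      refine csSup_le ⟨_, hmem0⟩ ?_
      rintro c ⟨x, hx0, hrowu, hcolu, rfl⟩
      have hrow : ∀ i, ∑ j, x i j = 1/(n:ℝ) := by
        intro i
        rw [hrowu i (Finset.mem_univ i), card_univ, Fintype.card_fin]
      have h := avg_ge w hw p k hk1 hkn x hx0 hrow hcolu
      have hk0 : (k:ℝ) ≠ 0 := by positivity
      calc ∑ i ∈ univ, ∑ j, w i j * x i j
          = ((n:ℝ)/k) * (((k:ℝ)/n) * (∑ i, ∑ j, w i j * x i j)) := by
            field_simp
        _ ≤ _ := by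
            exact mul_le_mul_of_nonneg_left h (by positivity)
    calc ((k:ℝ)/n) * M ≤ ((k:ℝ)/n) * (((n:ℝ)/k) *
          ((∑ T ∈ Finset.univ.powersetCard k, maxTransport n m w p T) / (n.choose k : ℝ))) :=
          mul_le_mul_of_nonneg_left hsup hkpos.le
      _ = _ := by
          have hk0 : (k:ℝ) ≠ 0 := by
            exact_mod_cast Nat.one_le_iff_ne_zero.mp hk1
          have hn0 : (n:ℝ) ≠ 0 := ne_of_gt hn'
          have h1 : ((k:ℝ)/n) * ((n:ℝ)/k) = 1 := by field_simp
          rw [← mul_assoc, h1, one_mul]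
  have h4 : ∑ k ∈ Finset.Icc 1 n, ((k:ℝ)/n) * M ≤
      ∑ k ∈ Finset.Icc 1 n,
        (∑ T ∈ Finset.univ.powersetCard k, maxTransport n m w p T) / (n.choose k : ℝ) :=
    Finset.sum_le_sum hk
  have hS : (∑ k ∈ Finset.Icc 1 n, (k:ℝ)) = n*(n+1)/2 := by linarith [gauss_icc n]
  have h5 : (1/2) * ((n:ℝ) * M) ≤ ∑ k ∈ Finset.Icc 1 n, ((k:ℝ)/n) * M := by
    have he : ∑ k ∈ Finset.Icc 1 n, ((k:ℝ)/n) * M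
        = (∑ k ∈ Finset.Icc 1 n, (k:ℝ)) * (M/n) := by
      rw [Finset.sum_mul]
      exact Finset.sum_congr rfl fun k _ => by ring
    rw [he, hS]
    have : (n:ℝ)*(n+1)/2 * (M/n) = (n+1)*M/2 := by field_simp
    rw [this]
    nlinarith [hM0]
  have h6 : (1/2) * (∑ req : Fin n → Fin m,
      (∏ a : Fin n, p (req a)) * maxPerfMatch n m w req) ≤ (1/2) * ((n:ℝ) * M) := by
    nlinarith [hEle]
  linarith
end
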